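/- arXiv:1712.08186 — 3 statements merged into one kernel-verified Lean document; each statement's English description precedes it below -/
import Mathlib

section
/- Let $0<\gamma<n$, $1\le p<n/\gamma$, $1/q=1/p-\gamma/n$ and $s=1+q/p'$. Then for every nonnegative measurable function $w$ on $\mathbb{R}^n$ and every nonnegative $f\in L^p(\mathbb{R}^n)$, the pointwise estimate $M_\gamma(fw^{-1})(x)\le M(f^{p/s}w^{-q/s})(x)^{s/q}\left(\int_{\mathbb{R}^n}f(y)^p\,dy\right)^{\gamma/n}$ holds for every $x\in\mathbb{R}^n$. -/
open MeasureTheory ENNReal NNReal Filter Topology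

noncomputable section

variable {n : ℕ}

/-- The axis-parallel cube with corner `a` and side length `h`. -/
def Cube (a : EuclideanSpace ℝ (Fin n)) (h : ℝ) : Set (EuclideanSpace ℝ (Fin n)) :=
  {y | ∀ i, a i ≤ y i ∧ y i ≤ a i + h}

/-- The fractional maximal operator `M_γ`; for `γ = 0` this is the Hardy–Littlewood
maximal operator `M`. -/
def fracMaximal (γ : ℝ) (f : EuclideanSpace ℝ (Fin n) → ℝ≥0∞)
    (x : EuclideanSpace ℝ (Fin n)) : ℝ≥0∞ :=
  ⨆ (a : EuclideanSpace ℝ (Fin n)) (h : ℝ) (_ : 0 < h) (_ : x ∈ Cube a h),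
    volume (Cube a h) ^ (γ / n - 1) * ∫⁻ y in Cube a h, f y

/-- The fractional integral operator `I_γ`. -/
def fracIntegral (γ : ℝ) (f : EuclideanSpace ℝ (Fin n) → ℝ≥0∞)
    (x : EuclideanSpace ℝ (Fin n)) : ℝ≥0∞ :=
  ∫⁻ y, f y * (‖x - y‖₊ : ℝ≥0∞) ^ (γ - (n : ℝ))

/-- A weight: measurable, positive and finite a.e., locally integrable. -/
def IsWeight (w : EuclideanSpace ℝ (Fin n) → ℝ≥0∞) : Prop :=
  Measurable w ∧ (∀ᵐ x ∂(volume : Measure (EuclideanSpace ℝ (Fin n))), 0 < w x ∧ w x < ∞) ∧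
    ∀ (a : EuclideanSpace ℝ (Fin n)) (h : ℝ), 0 < h → ∫⁻ y in Cube a h, w y < ∞

/-- The Muckenhoupt `A₁` condition with constant `C`. -/
def IsA1 (w : EuclideanSpace ℝ (Fin n) → ℝ≥0∞) (C : ℝ≥0) : Prop :=
  ∀ (a : EuclideanSpace ℝ (Fin n)) (h : ℝ), 0 < h →
    ∫⁻ y in Cube a h, w y ≤ C * volume (Cube a h) * essInf w (volume.restrict (Cube a h))

/-- The reverse Hölder `RH_∞` condition with constant `C`. -/
def IsRHinf (w : EuclideanSpace ℝ (Fin n) → ℝ≥0∞) (C : ℝ≥0) : Prop :=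
  ∀ (a : EuclideanSpace ℝ (Fin n)) (h : ℝ), 0 < h →
    essSup w (volume.restrict (Cube a h)) * volume (Cube a h) ≤ C * ∫⁻ y in Cube a h, w y

/-- The Muckenhoupt `A_p` condition (`1 < p`) with constant `C`. -/
def IsAp (p : ℝ) (w : EuclideanSpace ℝ (Fin n) → ℝ≥0∞) (C : ℝ≥0) : Prop :=
  ∀ (a : EuclideanSpace ℝ (Fin n)) (h : ℝ), 0 < h →
    (∫⁻ y in Cube a h, w y) * (∫⁻ y in Cube a h, w y ^ (-(1 / (p - 1)))) ^ (p - 1)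
      ≤ C * volume (Cube a h) ^ p

/-- `A_∞ = ⋃_p A_p`. -/
def IsAinf (w : EuclideanSpace ℝ (Fin n) → ℝ≥0∞) : Prop :=
  ∃ (p : ℝ) (C : ℝ≥0), 1 < p ∧ IsAp p w C

/-- The `A_r(u)` condition: Muckenhoupt `A_r` with respect to the measure `u dx`. -/
def IsApWrt (u : EuclideanSpace ℝ (Fin n) → ℝ≥0∞) (r : ℝ)
    (v : EuclideanSpace ℝ (Fin n) → ℝ≥0∞) (C : ℝ≥0) : Prop :=
  ∀ (a : EuclideanSpace ℝ (Fin n)) (h : ℝ), 0 < h →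
    (∫⁻ y in Cube a h, v y * u y) *
      (∫⁻ y in Cube a h, v y ^ (-(1 / (r - 1))) * u y) ^ (r - 1)
      ≤ C * (∫⁻ y in Cube a h, u y) ^ r

/-- `A_∞(u) = ⋃_r A_r(u)`. -/
def IsAinfWrt (u v : EuclideanSpace ℝ (Fin n) → ℝ≥0∞) : Prop :=
  ∃ (r : ℝ) (C : ℝ≥0), 1 < r ∧ IsApWrt u r v C

/-- The weak `L^{q,∞}(w)` quasinorm `sup_t t · w({|g|>t})^{1/q}`. -/
def weakNorm (q : ℝ) (w g : EuclideanSpace ℝ (Fin n) → ℝ≥0∞) : ℝ≥0∞ :=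
  ⨆ t : ℝ≥0, (t : ℝ≥0∞) * (∫⁻ x in {x | (t : ℝ≥0∞) < g x}, w x) ^ (1 / q)
/-- pointwise bound of `M_γ(f w⁻¹)` by the Hardy–Littlewood maximal
function of `f^{p/s} w^{-q/s}`, where `s = 1 + q/p'`. -/
theorem stmt0 (n : ℕ) (hn : 0 < n) (γ p q s : ℝ)
    (hγ : 0 < γ) (hγn : γ < n) (hp : 1 ≤ p) (hpn : p < n / γ)
    (hq : 1 / q = 1 / p - γ / n) (hs : s = 1 + q * (p - 1) / p)
    (w f : EuclideanSpace ℝ (Fin n) → ℝ≥0∞) (hw : Measurable w) (hf : Measurable f)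
    (hfLp : ∫⁻ y, f y ^ p < ∞) (x : EuclideanSpace ℝ (Fin n)) :
    fracMaximal γ (fun y => f y * (w y)⁻¹) x
      ≤ (fracMaximal 0 (fun y => f y ^ (p / s) * w y ^ (-(q / s))) x) ^ (s / q) *
          (∫⁻ y, f y ^ p) ^ (γ / n) := by
  
  have hn' : (0:ℝ) < n := by exact_mod_cast hn
  have hp0 : (0:ℝ) < p := lt_of_lt_of_le zero_lt_one hp
  have hγn0 : 0 < γ / n := div_pos hγ hn'
  have hγn1 : γ / n < 1 := (div_lt_one hn').mpr hγn
  have hpγ : p * γ < n := (lt_div_iff₀ hγ).mp hpn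
  have h1 : γ / n < 1 / p := by rw [div_lt_div_iff₀ hn' hp0]; nlinarith
  have hiq : 0 < 1 / q := by rw [hq]; linarith
  have hq0 : 0 < q := one_div_pos.mp hiq
  have hs0 : 0 < s := by
    have : 0 ≤ q * (p - 1) / p := div_nonneg (mul_nonneg hq0.le (by linarith)) hp0.le
    rw [hs]; linarith
  have hp' : p ≠ 0 := hp0.ne'
  have hq' : q ≠ 0 := hq0.ne'
  have hn0 : (n:ℝ) ≠ 0 := hn'.ne'
  have hs' : s ≠ 0 := hs0.ne'
  have hsq : s / q = 1 - γ / n := by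
    rw [hs]; field_simp; field_simp at hq; nlinarith [hq]
  have hsq0 : 0 ≤ s / q := by rw [hsq]; linarith
  set g : EuclideanSpace ℝ (Fin n) → ℝ≥0∞ :=
    fun y => f y ^ (p / s) * w y ^ (-(q / s)) with hgdef
  have hkey : ∀ (a : EuclideanSpace ℝ (Fin n)) (h : ℝ), 0 < h → x ∈ Cube a h →
      volume (Cube a h) ^ (γ / n - 1) * ∫⁻ y in Cube a h, f y * (w y)⁻¹
        ≤ (fracMaximal 0 g x) ^ (s / q) * (∫⁻ y, f y ^ p) ^ (γ / n) := by
    intro a h hh hx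
    set Q := Cube a h with hQ
    -- pointwise identity
    have hpt : ∀ y, f y * (w y)⁻¹ = (g y) ^ (s / q) * f y ^ (p * (γ / n)) := by
      intro y
      have e1 : (g y) ^ (s / q) = f y ^ (p / q) * (w y)⁻¹ := by
        rw [hgdef]
        rw [ENNReal.mul_rpow_of_nonneg _ _ hsq0, ← ENNReal.rpow_mul, ← ENNReal.rpow_mul]
        congr 1
        · congr 1; field_simp
        · rw [show -(q / s) * (s / q) = -1 by field_simp, ENNReal.rpow_neg_one]
      rw [e1, mul_assoc, mul_comm ((w y)⁻¹), ← mul_assoc,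
        ← ENNReal.rpow_add_of_nonneg _ _ (by positivity) (by positivity)]
      have : p / q + p * (γ / n) = 1 := by
        have := hq; field_simp at this ⊢; nlinarith [this]
      rw [this, ENNReal.rpow_one]
    have hconj : (q / s).HolderConjugate ((n:ℝ) / γ) := by
      rw [Real.holderConjugate_iff]
      constructor
      · rw [lt_div_iff₀ hs0, one_mul]
        have h2 : s / q < 1 := by rw [hsq]; linarith
        exact (div_lt_one hq0).mp h2
      · rw [inv_div, inv_div, hsq]; ring
    have hgm : Measurable g := by
      apply Measurable.mul
      · exact hf.pow_const _
      · exact hw.pow_const _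
    have hHolder : (∫⁻ y in Q, f y * (w y)⁻¹)
        ≤ (∫⁻ y in Q, g y) ^ (s / q) * (∫⁻ y in Q, f y ^ p) ^ (γ / n) := by
      have := ENNReal.lintegral_mul_le_Lp_mul_Lq (volume.restrict Q) hconj
        (f := fun y => (g y) ^ (s / q)) (g := fun y => f y ^ (p * (γ / n)))
        ((hgm.pow_const _).aemeasurable) ((hf.pow_const _).aemeasurable)
      calc (∫⁻ y in Q, f y * (w y)⁻¹)
          = ∫⁻ y in Q, ((fun y => (g y) ^ (s / q)) * fun y => f y ^ (p * (γ / n))) y := by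
            apply lintegral_congr; intro y; exact hpt y
        _ ≤ (∫⁻ y in Q, ((g y) ^ (s / q)) ^ (q / s)) ^ (1 / (q / s))
              * (∫⁻ y in Q, (f y ^ (p * (γ / n))) ^ ((n:ℝ) / γ)) ^ (1 / ((n:ℝ) / γ)) := this
        _ = (∫⁻ y in Q, g y) ^ (s / q) * (∫⁻ y in Q, f y ^ p) ^ (γ / n) := by
            rw [one_div_div, one_div_div]
            congr 1
            · congr 1
              apply lintegral_congr; intro y
              rw [← ENNReal.rpow_mul, show s / q * (q / s) = 1 by field_simp, ENNReal.rpow_one]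
            · congr 1
              apply lintegral_congr; intro y
              rw [← ENNReal.rpow_mul, show p * (γ / n) * ((n:ℝ) / γ) = p by field_simp]
    have hM : volume Q ^ ((0:ℝ) / n - 1) * ∫⁻ y in Q, g y ≤ fracMaximal 0 g x := by
      refine le_iSup_of_le a ?_
      refine le_iSup_of_le h ?_
      refine le_iSup_of_le hh ?_
      exact le_iSup_of_le hx le_rfl
    calc volume Q ^ (γ / n - 1) * ∫⁻ y in Q, f y * (w y)⁻¹
        ≤ volume Q ^ (γ / n - 1) *
            ((∫⁻ y in Q, g y) ^ (s / q) * (∫⁻ y in Q, f y ^ p) ^ (γ / n)) :=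
          mul_le_mul_right hHolder _
      _ ≤ volume Q ^ (γ / n - 1) *
            ((∫⁻ y in Q, g y) ^ (s / q) * (∫⁻ y, f y ^ p) ^ (γ / n)) := by
          gcongr
          exact Measure.restrict_le_self
      _ = (volume Q ^ ((0:ℝ) / n - 1) * ∫⁻ y in Q, g y) ^ (s / q) * (∫⁻ y, f y ^ p) ^ (γ / n) := by
          rw [ENNReal.mul_rpow_of_nonneg _ _ hsq0, ← ENNReal.rpow_mul]
          rw [show ((0:ℝ) / n - 1) * (s / q) = γ / n - 1 by rw [hsq]; ring]
          ring
      _ ≤ (fracMaximal 0 g x) ^ (s / q) * (∫⁻ y, f y ^ p) ^ (γ / n) :=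
          mul_le_mul' (ENNReal.rpow_le_rpow hM hsq0) le_rfl
  refine iSup_le fun a => iSup_le fun h => iSup_le fun hh => iSup_le fun hx => hkey a h hh hx
end
end

section
/- Let $0<\gamma<n$, $1\le p<n/\gamma$ and $1/q=1/p-\gamma/n$. Then for every nonnegative measurable function $w$ and every nonnegative $f\in L^p(\mathbb{R}^n)$, the pointwise estimate $M_\gamma(fw^{-1})(x)\le M(f^p w^{-q})(x)^{1/q}\left(\int_{\mathbb{R}^n}f(y)^p\,dy\right)^{\gamma/n}$ holds for every $x\in\mathbb{R}^n$. -/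
open MeasureTheory ENNReal NNReal Filter Topology

noncomputable section

variable {n : ℕ}

lemma cube_eq (a : EuclideanSpace ℝ (Fin n)) (h : ℝ) :
    Cube a h = (MeasurableEquiv.toLp 2 (Fin n → ℝ)).symm ⁻¹'
      (Set.univ.pi fun i => Set.Icc (a i) (a i + h)) := by
  ext y
  simp [Cube, Set.mem_pi, Set.mem_Icc, MeasurableEquiv.coe_toLp_symm, Pi.le_def, forall_and]

lemma volume_cube (a : EuclideanSpace ℝ (Fin n)) (h : ℝ) :
    volume (Cube a h) = ENNReal.ofReal h ^ n := by
  rw [cube_eq, (EuclideanSpace.volume_preserving_symm_measurableEquiv_toLp (Fin n)).measure_preimage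
    (MeasurableSet.univ_pi fun i => measurableSet_Icc).nullMeasurableSet,
    volume_pi_pi]
  simp [Real.volume_Icc]


/-- pointwise bound `M_γ(f w⁻¹)(x) ≤ M(f^p w^{-q})(x)^{1/q} (∫ f^p)^{γ/n}`. -/
theorem stmt1 (n : ℕ) (hn : 0 < n) (γ p q : ℝ)
    (hγ : 0 < γ) (hγn : γ < n) (hp : 1 ≤ p) (hpn : p < n / γ)
    (hq : 1 / q = 1 / p - γ / n)
    (w f : EuclideanSpace ℝ (Fin n) → ℝ≥0∞) (hw : Measurable w) (hf : Measurable f)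
    (hfLp : ∫⁻ y, f y ^ p < ∞) (x : EuclideanSpace ℝ (Fin n)) :
    fracMaximal γ (fun y => f y * (w y)⁻¹) x
      ≤ (fracMaximal 0 (fun y => f y ^ p * w y ^ (-q)) x) ^ (1 / q) *
          (∫⁻ y, f y ^ p) ^ (γ / n) := by
  have hn' : (0:ℝ) < n := by exact_mod_cast hn
  have hp0 : (0:ℝ) < p := lt_of_lt_of_le one_pos hp
  have hpγ : p * γ < n := by have := (lt_div_iff₀ hγ).1 hpn; linarith
  have hγn1 : γ / n < 1 / p := by rw [div_lt_div_iff₀ hn' hp0]; linarith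
  have hγn0 : 0 < γ / n := div_pos hγ hn'
  have hp1 : 1 / p ≤ 1 := by rw [div_le_one hp0]; exact hp
  have hiq_pos : 0 < 1 / q := by rw [hq]; linarith
  have hiq_lt1 : 1 / q < 1 := by rw [hq]; linarith
  have hiqnn : (0:ℝ) ≤ 1 / q := hiq_pos.le
  have hq0 : 0 < q := by
    by_contra hc
    push_neg at hc
    have : 1 / q ≤ 0 := div_nonpos_of_nonneg_of_nonpos zero_le_one hc
    linarith
  have hq1 : 1 < q := by rwa [div_lt_one hq0] at hiq_lt1
  set q' : ℝ := (1 - 1/q)⁻¹ with hq'def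
  have hq'inv : 1 / q' = 1 - 1/q := by rw [hq'def, one_div, inv_inv]
  have hq'pos : 0 < q' := by rw [hq'def]; exact inv_pos.2 (by linarith)
  have hconj : q.HolderConjugate q' := by
    have h := Real.HolderConjugate.inv_one_sub_inv (a := 1/q) hiq_pos hiq_lt1
    simpa [hq'def, one_div] using h
  set c : ℝ := γ * q' / n with hc
  have hc0 : 0 < c := by positivity
  have hγnq' : γ / n ≤ 1 / q' := by rw [hq'inv, hq]; linarith
  have hc1 : c ≤ 1 := by
    rw [hc, div_le_one hn']
    have := (div_le_div_iff₀ hn' hq'pos).1 hγnq'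
    linarith
  have hcq' : c * (1/q') = γ / n := by
    rw [hc]
    have h1 : q' ≠ 0 := hq'pos.ne'
    have h2 : (n:ℝ) ≠ 0 := hn'.ne'
    field_simp
  -- pointwise factorization
  have key : ∀ y : EuclideanSpace ℝ (Fin n),
      f y * (w y)⁻¹ = (f y ^ p * w y ^ (-q)) ^ (1/q) * f y ^ (p * (γ/n)) := by
    intro y
    rw [ENNReal.mul_rpow_of_nonneg _ _ hiqnn, ← ENNReal.rpow_mul, ← ENNReal.rpow_mul]
    have e1 : -q * (1/q) = -1 := by field_simp
    have e2 : p * (1/q) + p * (γ/n) = 1 := by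
      rw [hq]; field_simp; ring
    rw [e1, ENNReal.rpow_neg_one, mul_right_comm,
      ← ENNReal.rpow_add_of_nonneg _ _ (by positivity) (by positivity), e2, ENNReal.rpow_one]
  refine iSup_le fun a => iSup_le fun h => iSup_le fun hh => iSup_le fun hx => ?_
  set Q := Cube a h with hQ
  set μQ := volume Q with hμQ
  have hμQ0 : μQ ≠ 0 := by
    rw [hμQ, hQ, volume_cube]
    exact pow_ne_zero _ (ENNReal.ofReal_pos.2 hh).ne'
  have hμQt : μQ ≠ ∞ := by
    rw [hμQ, hQ, volume_cube]
    exact ENNReal.pow_ne_top ENNReal.ofReal_ne_top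
  set g : EuclideanSpace ℝ (Fin n) → ℝ≥0∞ := fun y => f y ^ p * w y ^ (-q) with hg
  have hgm : Measurable g := (hf.pow_const p).mul (hw.pow_const (-q))
  set B := ∫⁻ y in Q, g y with hB
  set I := ∫⁻ y, f y ^ p with hI
  -- Hoelder 1
  have hold1 : (∫⁻ y in Q, f y * (w y)⁻¹)
      ≤ B ^ (1/q) * (∫⁻ y in Q, (f y ^ p) ^ c) ^ (1/q') := by
    have H := ENNReal.lintegral_mul_le_Lp_mul_Lq (volume.restrict Q) hconj
      (f := fun y => (f y ^ p * w y ^ (-q)) ^ (1/q)) (g := fun y => f y ^ (p * (γ/n)))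
      (hgm.pow_const _).aemeasurable (hf.pow_const _).aemeasurable
    simp only [Pi.mul_apply] at H
    calc (∫⁻ y in Q, f y * (w y)⁻¹)
        = ∫⁻ y in Q, (f y ^ p * w y ^ (-q)) ^ (1/q) * f y ^ (p * (γ/n)) :=
          lintegral_congr fun y => key y
      _ ≤ (∫⁻ y in Q, ((f y ^ p * w y ^ (-q)) ^ (1/q)) ^ q) ^ (1/q) *
            (∫⁻ y in Q, (f y ^ (p * (γ/n))) ^ q') ^ (1/q') := H
      _ = B ^ (1/q) * (∫⁻ y in Q, (f y ^ p) ^ c) ^ (1/q') := by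
          congr 1
          · congr 1
            refine lintegral_congr fun y => ?_
            rw [← ENNReal.rpow_mul, one_div, inv_mul_cancel₀ hq0.ne', ENNReal.rpow_one]
          · congr 1
            refine lintegral_congr fun y => ?_
            rw [← ENNReal.rpow_mul, ← ENNReal.rpow_mul]
            congr 1
            rw [hc]; ring
  -- Hoelder 2
  have hQle : (∫⁻ y in Q, f y ^ p) ≤ I := setLIntegral_le_lintegral _ _
  have hold2 : (∫⁻ y in Q, (f y ^ p) ^ c) ≤ I ^ c * μQ ^ (1 - c) := by
    rcases eq_or_lt_of_le hc1 with hceq | hclt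
    · rw [hceq]
      simp only [ENNReal.rpow_one, sub_self, ENNReal.rpow_zero, mul_one]
      exact hQle
    · have hconj2 : (c⁻¹).HolderConjugate ((1-c)⁻¹) :=
        Real.HolderConjugate.inv_inv hc0 (by linarith) (by ring)
      have H := ENNReal.lintegral_mul_le_Lp_mul_Lq (volume.restrict Q) hconj2
        (f := fun y => (f y ^ p) ^ c) (g := fun _ => (1:ℝ≥0∞))
        ((hf.pow_const p).pow_const c).aemeasurable aemeasurable_const
      simp only [Pi.mul_apply, mul_one, ENNReal.one_rpow, lintegral_const,
        Measure.restrict_apply_univ, one_mul, one_div, inv_inv] at H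
      calc (∫⁻ y in Q, (f y ^ p) ^ c)
          ≤ (∫⁻ y in Q, ((f y ^ p) ^ c) ^ c⁻¹) ^ c * μQ ^ (1 - c) := H
        _ = (∫⁻ y in Q, f y ^ p) ^ c * μQ ^ (1 - c) := by
            congr 2
            refine lintegral_congr fun y => ?_
            rw [← ENNReal.rpow_mul, mul_inv_cancel₀ hc0.ne', ENNReal.rpow_one]
        _ ≤ I ^ c * μQ ^ (1 - c) :=
            mul_le_mul_left (ENNReal.rpow_le_rpow hQle hc0.le) _
  -- combine
  have hμpow : μQ ^ (γ/n - 1) * μQ ^ ((1-c)*(1/q')) = (μQ⁻¹) ^ (1/q) := by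
    rw [← ENNReal.rpow_add _ _ hμQ0 hμQt, ← ENNReal.rpow_neg_one μQ, ← ENNReal.rpow_mul]
    congr 1
    linear_combination hq'inv - hcq'
  have hM : μQ⁻¹ * B ≤ fracMaximal 0 g x := by
    have hle : volume (Cube a h) ^ ((0:ℝ)/n - 1) * ∫⁻ y in Cube a h, g y
        ≤ fracMaximal 0 g x :=
      le_iSup_of_le a <| le_iSup_of_le h <| le_iSup_of_le hh <| le_iSup_of_le hx le_rfl
    simpa [← hQ, ← hμQ, ← hB, ENNReal.rpow_neg_one] using hle
  calc μQ ^ (γ/n - 1) * ∫⁻ y in Q, f y * (w y)⁻¹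
      ≤ μQ ^ (γ/n - 1) * (B ^ (1/q) * (I ^ c * μQ ^ (1 - c)) ^ (1/q')) := by
        refine mul_le_mul_right ?_ _
        exact hold1.trans (mul_le_mul_right (ENNReal.rpow_le_rpow hold2 (by positivity)) _)
    _ = (μQ⁻¹) ^ (1/q) * B ^ (1/q) * I ^ (γ/n) := by
        rw [ENNReal.mul_rpow_of_nonneg _ _ (by positivity : (0:ℝ) ≤ 1/q'),
          ← ENNReal.rpow_mul, ← ENNReal.rpow_mul, hcq', ← hμpow]
        ring
    _ = (μQ⁻¹ * B) ^ (1/q) * I ^ (γ/n) := by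
        rw [ENNReal.mul_rpow_of_nonneg _ _ hiqnn]
    _ ≤ (fracMaximal 0 g x) ^ (1/q) * I ^ (γ/n) :=
        mul_le_mul_left (ENNReal.rpow_le_rpow hM hiqnn) _
end
end

section
/- Let $0<\gamma<n$, $1<p<n/\gamma$, $1/q=1/p-\gamma/n$, $r=1+q/p'$, and let $w$ be a weight with $w^q=uv^{1-r}$ for weights $u,v$. Set $z=u^{1/q}v^{1/p}$ and $S(f)=M_\gamma(fv)/v$. Then the strong inequality $\left(\int_{\mathbb{R}^n}M_\gamma f(x)^q w(x)^q dx\right)^{1/q}\le C\left(\int_{\mathbb{R}^n}|f|^p w^p\right)^{1/p}$ for all $f$ holds if and only if $\left(\int_{\mathbb{R}^n}S(f)(x)^q z(x)^q dx\right)^{1/q}\le C'\left(\int_{\mathbb{R}^n}|f|^p z^p\right)^{1/p}$ for all $f$. -/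
open MeasureTheory ENNReal NNReal Filter Topology

noncomputable section

variable {n : ℕ}

lemma fracMaximal_congr_ae {n : ℕ} {γ : ℝ} {f g : EuclideanSpace ℝ (Fin n) → ℝ≥0∞}
    (hfg : f =ᵐ[volume] g) : fracMaximal γ f = fracMaximal γ g := by
  funext x
  unfold fracMaximal
  congr 1; funext a; congr 1; funext h
  congr 1; funext hh; congr 1; funext hx
  congr 1
  exact lintegral_congr_ae (ae_restrict_of_ae hfg)

/-- for `w^q = u v^{1-r}`, `r = 1 + q/p'`, `z = u^{1/q} v^{1/p}`, the weighted
strong `(p,q)` inequality for `M_γ` with weight `w` is equivalent to the strong `(p,q)`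
inequality for `S f = M_γ(fv)/v` with weight `z` (note `z^q = u v^{q/p}`, `z^p = u^{p/q} v`). -/
theorem stmt8 (n : ℕ) (hn : 0 < n) (γ p q r : ℝ)
    (hγ : 0 < γ) (hγn : γ < n) (hp : 1 < p) (hpn : p < n / γ)
    (hq : 1 / q = 1 / p - γ / n) (hr : r = 1 + q * (p - 1) / p)
    (u v w : EuclideanSpace ℝ (Fin n) → ℝ≥0∞)
    (huw : IsWeight u) (hvw : IsWeight v) (hww : IsWeight w)
    (hfact : ∀ x, w x ^ q = u x * v x ^ (1 - r)) :
    (∃ C : ℝ≥0, 0 < C ∧ ∀ f : EuclideanSpace ℝ (Fin n) → ℝ≥0∞, Measurable f →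
        (∫⁻ x, fracMaximal γ f x ^ q * w x ^ q) ^ (1 / q)
          ≤ C * (∫⁻ x, f x ^ p * w x ^ p) ^ (1 / p)) ↔
      (∃ C : ℝ≥0, 0 < C ∧ ∀ f : EuclideanSpace ℝ (Fin n) → ℝ≥0∞, Measurable f →
        (∫⁻ x, (fracMaximal γ (fun y => f y * v y) x / v x) ^ q * (u x * v x ^ (q / p))) ^ (1 / q)
          ≤ C * (∫⁻ x, f x ^ p * (u x ^ (p / q) * v x)) ^ (1 / p)) := by
  -- basic facts about the exponents
  have hp0 : (0:ℝ) < p := lt_trans one_pos hp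
  have hn0 : (0:ℝ) < n := Nat.cast_pos.mpr hn
  have hpγ : p * γ < n := (lt_div_iff₀ hγ).mp hpn
  have h1q : (0:ℝ) < 1 / q := by
    rw [hq, sub_pos, div_lt_div_iff₀ hn0 hp0]
    nlinarith
  have hq0 : (0:ℝ) < q := by
    by_contra hc
    push_neg at hc
    have : 1 / q ≤ 0 := div_nonpos_of_nonneg_of_nonpos zero_le_one hc
    linarith
  have hqne : q ≠ 0 := ne_of_gt hq0
  have hpne : p ≠ 0 := ne_of_gt hp0
  have h1r : 1 - r = q / p - q := by rw [hr]; field_simp; ring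
  have hqp : q * (p / q) = p := by field_simp
  have hexp : (1 - r) * (p / q) = 1 - p := by rw [h1r]; field_simp
  -- pointwise identities valid where 0 < v x < ∞
  have keyA : ∀ x, v x ≠ 0 → v x ≠ ∞ → ∀ a : ℝ≥0∞,
      (a / v x) ^ q * (u x * v x ^ (q / p)) = a ^ q * w x ^ q := by
    intro x hv0 hvt a
    rw [hfact x, h1r, ENNReal.rpow_sub _ _ hv0 hvt,
      ENNReal.div_rpow_of_nonneg _ _ (le_of_lt hq0)]
    simp [div_eq_mul_inv, mul_comm, mul_assoc, mul_left_comm]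
  have keyB : ∀ x, v x ≠ 0 → v x ≠ ∞ → ∀ b : ℝ≥0∞,
      (b * v x) ^ p * w x ^ p = b ^ p * (u x ^ (p / q) * v x) := by
    intro x hv0 hvt b
    have hwp : w x ^ p = u x ^ (p / q) * v x ^ ((1:ℝ) - p) := by
      calc w x ^ p = (w x ^ q) ^ (p / q) := by
            rw [← ENNReal.rpow_mul, hqp]
        _ = u x ^ (p / q) * v x ^ ((1:ℝ) - p) := by
            rw [hfact x, ENNReal.mul_rpow_of_nonneg _ _ (le_of_lt (div_pos hp0 hq0)),
              ← ENNReal.rpow_mul, hexp]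
    rw [hwp, ENNReal.mul_rpow_of_nonneg _ _ (le_of_lt hp0)]
    have hvv : v x ^ p * v x ^ ((1:ℝ) - p) = v x := by
      rw [← ENNReal.rpow_add _ _ hv0 hvt]
      norm_num
    calc b ^ p * v x ^ p * (u x ^ (p / q) * v x ^ ((1:ℝ) - p))
        = b ^ p * (u x ^ (p / q) * (v x ^ p * v x ^ ((1:ℝ) - p))) := by ring
      _ = b ^ p * (u x ^ (p / q) * v x) := by rw [hvv]
  constructor
  · rintro ⟨C, hC, H⟩
    refine ⟨C, hC, fun f hf => ?_⟩
    have hg : Measurable fun y => f y * v y := hf.mul hvw.1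
    have := H _ hg
    have hL : (∫⁻ x, (fracMaximal γ (fun y => f y * v y) x / v x) ^ q *
        (u x * v x ^ (q / p))) =
        ∫⁻ x, fracMaximal γ (fun y => f y * v y) x ^ q * w x ^ q := by
      refine lintegral_congr_ae ?_
      filter_upwards [hvw.2.1] with x hx
      exact keyA x (ne_of_gt hx.1) (ne_of_lt hx.2) _
    have hR : (∫⁻ x, (f x * v x) ^ p * w x ^ p) =
        ∫⁻ x, f x ^ p * (u x ^ (p / q) * v x) := by
      refine lintegral_congr_ae ?_
      filter_upwards [hvw.2.1] with x hx
      exact keyB x (ne_of_gt hx.1) (ne_of_lt hx.2) _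
    rw [hL]
    rw [hR] at this
    exact this
  · rintro ⟨C, hC, H⟩
    refine ⟨C, hC, fun f hf => ?_⟩
    set g : EuclideanSpace ℝ (Fin n) → ℝ≥0∞ := fun x => f x * (v x)⁻¹ with hgdef
    have hgm : Measurable g := hf.mul hvw.1.inv
    have hgv : (fun y => g y * v y) =ᵐ[volume] f := by
      filter_upwards [hvw.2.1] with x hx
      simp only [hgdef]
      rw [mul_assoc, ENNReal.inv_mul_cancel (ne_of_gt hx.1) (ne_of_lt hx.2), mul_one]
    have hM : fracMaximal γ (fun y => g y * v y) = fracMaximal γ f :=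
      fracMaximal_congr_ae hgv
    have := H _ hgm
    rw [hM] at this
    have hL : (∫⁻ x, (fracMaximal γ f x / v x) ^ q * (u x * v x ^ (q / p))) =
        ∫⁻ x, fracMaximal γ f x ^ q * w x ^ q := by
      refine lintegral_congr_ae ?_
      filter_upwards [hvw.2.1] with x hx
      exact keyA x (ne_of_gt hx.1) (ne_of_lt hx.2) _
    have hR : (∫⁻ x, g x ^ p * (u x ^ (p / q) * v x)) =
        ∫⁻ x, f x ^ p * w x ^ p := by
      refine lintegral_congr_ae ?_
      filter_upwards [hvw.2.1] with x hx
      have h1 : f x = g x * v x := by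
        simp only [hgdef]
        rw [mul_assoc, ENNReal.inv_mul_cancel (ne_of_gt hx.1) (ne_of_lt hx.2), mul_one]
      rw [h1, keyB x (ne_of_gt hx.1) (ne_of_lt hx.2)]
    rw [hL] at this
    rw [hR] at this
    exact this
end
end
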